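/- arXiv:1307.3810 — 2 statements merged into one kernel-verified Lean document; each statement's English description precedes it below -/
import Mathlib

section
/- For any square n×n real matrix A, det(I + A^T A) = Σ_P det(A_P)^2, where the sum is over all square submatrix patterns P of A including the empty pattern which contributes 1. In particular det(I + A^T A) ≥ 1. -/
open Matrix Finset Equiv

section Aux
variable {R : Type*} [CommRing R]

lemma cardImageOf {m n : ℕ} {r : Fin m → Fin n} (hr : Function.Injective r) :
    (Finset.image r Finset.univ).card = m := by
  rw [Finset.card_image_of_injective _ hr, Finset.card_univ, Fintype.card_fin]

noncomputable def permOf {m n : ℕ} (r : Fin m → Fin n) (hr : Function.Injective r) :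
    Equiv.Perm (Fin m) :=
  Equiv.ofBijective
    (fun i => (Finset.orderIsoOfFin (Finset.image r Finset.univ) (cardImageOf hr)).symm
      ⟨r i, by simp [Finset.mem_image]⟩) <| by
    have hinj : Function.Injective (fun i =>
        (Finset.orderIsoOfFin (Finset.image r Finset.univ) (cardImageOf hr)).symm
          ⟨r i, by simp [Finset.mem_image]⟩) := by
      intro a b hab
      apply hr
      have := congrArg (Finset.orderIsoOfFin (Finset.image r Finset.univ) (cardImageOf hr)) hab
      simpa [Subtype.ext_iff] using this
    exact Finite.injective_iff_bijective.mp hinj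

lemma permOf_spec {m n : ℕ} (r : Fin m → Fin n) (hr : Function.Injective r) (i : Fin m) :
    (Finset.image r Finset.univ).orderEmbOfFin (cardImageOf hr) (permOf r hr i) = r i := by
  rw [← Finset.coe_orderIsoOfFin_apply]
  simp [permOf, Equiv.ofBijective_apply]

lemma orderEmbOfFin_congr {α : Type*} [LinearOrder α] {s t : Finset α} {k : ℕ} (hst : s = t)
    (h : s.card = k) (x : Fin k) : s.orderEmbOfFin h x = t.orderEmbOfFin (hst ▸ h) x := by
  subst hst; rfl

lemma image_orderEmbOfFin_comp {m n : ℕ} (J : Finset (Fin n)) (h : J.card = m)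
    (σ : Equiv.Perm (Fin m)) :
    Finset.image (fun i => J.orderEmbOfFin h (σ i)) Finset.univ = J := by
  ext x
  simp only [Finset.mem_image, Finset.mem_univ, true_and]
  constructor
  · rintro ⟨i, rfl⟩; exact J.orderEmbOfFin_mem h (σ i)
  · intro hx
    have : x ∈ Set.range (J.orderEmbOfFin h) := by
      rw [Finset.range_orderEmbOfFin]; exact hx
    obtain ⟨i, rfl⟩ := this
    exact ⟨σ.symm i, by simp⟩

/-- Cauchy–Binet. -/
lemma my_cauchy_binet {m n : ℕ} (B : Matrix (Fin m) (Fin n) R) (C : Matrix (Fin n) (Fin m) R) :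
    (B * C).det = ∑ J : Finset (Fin n),
      if h : J.card = m then
        (B.submatrix id (J.orderEmbOfFin h)).det * (C.submatrix (J.orderEmbOfFin h) id).det
      else 0 := by
  classical
  set T : (Fin m → Fin n) → R :=
    fun r => (∏ i, B i (r i)) * (Matrix.of fun i j => C (r i) j).det with hT
  -- expand det multilinearly in the rows
  have h1 : (B * C).det = ∑ r : Fin m → Fin n, T r := by
    have : (B * C).det
        = (detRowAlternating : (Fin m → R) [⋀^Fin m]→ₗ[R] R).toMultilinearMap
            (fun i => ∑ k, B i k • C k) := by
      congr 1
      funext i j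
      simp [Matrix.mul_apply, Finset.sum_apply, Pi.smul_apply]
    rw [this, MultilinearMap.map_sum]
    refine Finset.sum_congr rfl fun r _ => ?_
    rw [MultilinearMap.map_smul_univ]
    rfl
  -- non-injective r contribute 0
  have h2 : ∀ r : Fin m → Fin n, ¬ Function.Injective r → T r = 0 := by
    intro r hr
    rw [Function.not_injective_iff] at hr
    obtain ⟨i, j, hij, hne⟩ := hr
    have : (Matrix.of fun i j => C (r i) j).det = 0 :=
      Matrix.det_zero_of_row_eq hne (funext fun k => by simp [Matrix.of_apply, hij])
    simp [hT, this]
  have h3 : (B * C).det = ∑ r ∈ Finset.univ.filter (fun r : Fin m → Fin n =>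
      Function.Injective r), T r := by
    rw [h1, Finset.sum_filter_of_ne]
    intro r _ hne
    by_contra hinj
    exact hne (h2 r hinj)
  -- reindex over pairs (J, σ)
  have h4 : ∑ r ∈ Finset.univ.filter (fun r : Fin m → Fin n => Function.Injective r), T r
      = ∑ p ∈ ((Finset.univ : Finset (Finset (Fin n))).filter (fun J => J.card = m)) ×ˢ
          (Finset.univ : Finset (Equiv.Perm (Fin m))),
          if h : p.1.card = m then T (fun i => p.1.orderEmbOfFin h (p.2 i)) else 0 := by
    refine Finset.sum_bij (i := fun r hr =>
        (Finset.image r Finset.univ, permOf r (Finset.mem_filter.mp hr).2)) ?_ ?_ ?_ ?_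
    · intro r hr
      simp only [Finset.mem_product, Finset.mem_filter, Finset.mem_univ, true_and]
      exact ⟨cardImageOf (Finset.mem_filter.mp hr).2, trivial⟩
    · intro r₁ hr₁ r₂ hr₂ hp
      have hi₁ := (Finset.mem_filter.mp hr₁).2
      have hi₂ := (Finset.mem_filter.mp hr₂).2
      set back : Finset (Fin n) × Equiv.Perm (Fin m) → (Fin m → Fin n) :=
        fun p => if h : p.1.card = m then (fun i => p.1.orderEmbOfFin h (p.2 i)) else r₁
        with hback
      have hb : ∀ (r : Fin m → Fin n) (hr : Function.Injective r),
          back (Finset.image r Finset.univ, permOf r hr) = r := by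
        intro r hr
        funext i
        simp only [hback, dif_pos (cardImageOf hr)]
        exact permOf_spec r hr i
      calc r₁ = back (Finset.image r₁ Finset.univ, permOf r₁ hi₁) := (hb r₁ hi₁).symm
        _ = back (Finset.image r₂ Finset.univ, permOf r₂ hi₂) := congrArg back hp
        _ = r₂ := hb r₂ hi₂
    · rintro ⟨J, σ⟩ hp
      have hJ : J.card = m := (Finset.mem_filter.mp (Finset.mem_product.mp hp).1).2
      set r : Fin m → Fin n := fun i => J.orderEmbOfFin hJ (σ i) with hr
      have hinj : Function.Injective r := fun a b hab => σ.injective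
        ((J.orderEmbOfFin hJ).injective hab)
      have himg : Finset.image r Finset.univ = J := image_orderEmbOfFin_comp J hJ σ
      refine ⟨r, Finset.mem_filter.mpr ⟨Finset.mem_univ _, hinj⟩, ?_⟩
      have hperm : permOf r hinj = σ := by
        refine Equiv.ext fun i => ?_
        apply ((Finset.image r Finset.univ).orderEmbOfFin (cardImageOf hinj)).injective
        rw [permOf_spec r hinj i]
        exact orderEmbOfFin_congr himg.symm hJ (σ i)
      exact Prod.ext himg hperm
    · intro r hr
      have hinj := (Finset.mem_filter.mp hr).2
      rw [dif_pos (cardImageOf hinj)]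
      exact congrArg T (funext fun i => (permOf_spec r hinj i)).symm
  -- compute the inner sums
  rw [h3, h4, Finset.sum_product]
  rw [show (∑ J : Finset (Fin n),
      if h : J.card = m then
        (B.submatrix id (J.orderEmbOfFin h)).det * (C.submatrix (J.orderEmbOfFin h) id).det
      else 0)
      = ∑ J ∈ Finset.univ.filter (fun J : Finset (Fin n) => J.card = m),
        if h : J.card = m then
          (B.submatrix id (J.orderEmbOfFin h)).det * (C.submatrix (J.orderEmbOfFin h) id).det
        else 0 from (Finset.sum_filter_of_ne (fun J _ hne => by
          by_contra hc
          exact hne (dif_neg hc))).symm]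
  refine Finset.sum_congr rfl fun J hJmem => ?_
  have hJ : J.card = m := (Finset.mem_filter.mp hJmem).2
  rw [dif_pos hJ]
  simp only [dif_pos hJ]
  -- now: ∑ σ, T (emb ∘ σ) = det (B.submatrix id emb) * det (C.submatrix emb id)
  have key : ∀ σ : Equiv.Perm (Fin m),
      T (fun i => J.orderEmbOfFin hJ (σ i))
        = (((Equiv.Perm.sign σ : ℤ) : R) * ∏ i, B i (J.orderEmbOfFin hJ (σ i)))
            * (C.submatrix (J.orderEmbOfFin hJ) id).det := by
    intro σ
    have hmat : (Matrix.of fun i j => C (J.orderEmbOfFin hJ (σ i)) j)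
        = (C.submatrix (J.orderEmbOfFin hJ) id).submatrix σ id := rfl
    rw [hT]
    simp only [hmat, Matrix.det_permute]
    ring
  simp only [key]
  rw [← Finset.sum_mul]
  congr 1
  rw [← Matrix.det_transpose (B.submatrix id (J.orderEmbOfFin hJ)), Matrix.det_apply']
  refine Finset.sum_congr rfl fun σ _ => ?_
  congr 1

lemma my_det_one_add {n : ℕ} (M : Matrix (Fin n) (Fin n) R) :
    (1 + M).det = ∑ s : Finset (Fin n),
      (M.submatrix (s.orderEmbOfFin rfl) (s.orderEmbOfFin rfl)).det := by
  classical
  have h1 : (1 + M).det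
      = (detRowAlternating : (Fin n → R) [⋀^Fin n]→ₗ[R] R).toMultilinearMap
          ((fun i => M i) + (fun i => (1 : Matrix (Fin n) (Fin n) R) i)) := by
    congr 1
    funext i j
    simp [Matrix.add_apply, Pi.add_apply]
    ring
  rw [h1, MultilinearMap.map_add_univ]
  refine Finset.sum_congr rfl fun s _ => ?_
  -- the term is det of the row-piecewise matrix
  have hpw : (detRowAlternating : (Fin n → R) [⋀^Fin n]→ₗ[R] R).toMultilinearMap
      (s.piecewise (fun i => M i) (fun i => (1 : Matrix (Fin n) (Fin n) R) i))
      = (Matrix.of (s.piecewise (fun i => M i)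
          (fun i => (1 : Matrix (Fin n) (Fin n) R) i))).det := rfl
  rw [hpw]
  set N := Matrix.of (s.piecewise (fun i => M i)
      (fun i => (1 : Matrix (Fin n) (Fin n) R) i)) with hN
  -- block decomposition
  have hdet : N.det = (N.submatrix (Equiv.sumCompl (· ∈ s)) (Equiv.sumCompl (· ∈ s))).det :=
    (Matrix.det_submatrix_equiv_self (Equiv.sumCompl (· ∈ s)) N).symm
  have hblock : N.submatrix (Equiv.sumCompl (· ∈ s)) (Equiv.sumCompl (· ∈ s))
      = Matrix.fromBlocks
          (Matrix.of fun (i : {x // x ∈ s}) (j : {x // x ∈ s}) => M i.1 j.1)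
          (Matrix.of fun (i : {x // x ∈ s}) (j : {x // x ∉ s}) => M i.1 j.1)
          0 1 := by
    ext i j
    cases i with
    | inl i =>
      cases j with
      | inl j => simp [Matrix.submatrix_apply, Equiv.sumCompl_apply_inl, N,
          Finset.piecewise_eq_of_mem _ _ _ i.2]
      | inr j => simp [Matrix.submatrix_apply, Equiv.sumCompl_apply_inl,
          Equiv.sumCompl_apply_inr, N, Finset.piecewise_eq_of_mem _ _ _ i.2]
    | inr i =>
      cases j with
      | inl j =>
        have : (i.1 : Fin n) ≠ j.1 := fun hc => i.2 (hc ▸ j.2)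
        simp [Matrix.submatrix_apply, Equiv.sumCompl_apply_inl, Equiv.sumCompl_apply_inr,
          N, Finset.piecewise_eq_of_notMem _ _ _ i.2, Matrix.one_apply, this]
      | inr j =>
        simp [Matrix.submatrix_apply, Equiv.sumCompl_apply_inr, N,
          Finset.piecewise_eq_of_notMem _ _ _ i.2, Matrix.one_apply, Subtype.ext_iff]
  rw [hdet, hblock, Matrix.det_fromBlocks_zero₂₁, Matrix.det_one, mul_one]
  -- identify the block with the submatrix
  rw [← Matrix.det_submatrix_equiv_self (s.orderIsoOfFin rfl).toEquiv.symm
    (M.submatrix (s.orderEmbOfFin rfl) (s.orderEmbOfFin rfl))]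
  congr 1
  ext i j
  rw [Matrix.submatrix_apply, Matrix.submatrix_apply, ← Finset.coe_orderIsoOfFin_apply,
    ← Finset.coe_orderIsoOfFin_apply]
  simp

end Aux

theorem det_one_add_transpose_mul_self {n : ℕ} (A : Matrix (Fin n) (Fin n) ℝ) :
    (1 + Aᵀ * A).det =
      (∑ I : Finset (Fin n), ∑ J : Finset (Fin n),
        (if h : I.card = J.card then
          ((A.submatrix (I.orderEmbOfFin h) (J.orderEmbOfFin rfl)).det) ^ 2
        else 0)) ∧
    1 ≤ (1 + Aᵀ * A).det := by
  classical
  have main : (1 + Aᵀ * A).det =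
      ∑ I : Finset (Fin n), ∑ J : Finset (Fin n),
        (if h : I.card = J.card then
          ((A.submatrix (I.orderEmbOfFin h) (J.orderEmbOfFin rfl)).det) ^ 2
        else 0) := by
    rw [my_det_one_add]
    have step : ∀ I : Finset (Fin n),
        ((Aᵀ * A).submatrix (I.orderEmbOfFin rfl) (I.orderEmbOfFin rfl)).det
          = ∑ J : Finset (Fin n),
            (if h : J.card = I.card then
              ((A.submatrix (J.orderEmbOfFin h) (I.orderEmbOfFin rfl)).det) ^ 2
            else 0) := by
      intro I
      rw [Matrix.submatrix_mul _ _ _ id _ Function.bijective_id, my_cauchy_binet]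
      refine Finset.sum_congr rfl fun J _ => ?_
      by_cases h : J.card = I.card
      · rw [dif_pos h, dif_pos h]
        have h1 : (Aᵀ.submatrix (I.orderEmbOfFin rfl) id).submatrix id (J.orderEmbOfFin h)
            = (A.submatrix (J.orderEmbOfFin h) (I.orderEmbOfFin rfl))ᵀ := by
          ext i j; simp [Matrix.submatrix_apply, Matrix.transpose_apply]
        have h2 : (A.submatrix id (I.orderEmbOfFin rfl)).submatrix (J.orderEmbOfFin h) id
            = A.submatrix (J.orderEmbOfFin h) (I.orderEmbOfFin rfl) := by
          ext i j; simp
        rw [h1, h2, Matrix.det_transpose, sq]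
      · rw [dif_neg h, dif_neg h]
    rw [Finset.sum_congr rfl fun I _ => step I, Finset.sum_comm]
  refine ⟨main, ?_⟩
  rw [main]
  set f : Finset (Fin n) → Finset (Fin n) → ℝ := fun I J =>
    (if h : I.card = J.card then
      ((A.submatrix (I.orderEmbOfFin h) (J.orderEmbOfFin rfl)).det) ^ 2
    else 0) with hf
  have hnonneg : ∀ I J, 0 ≤ f I J := by
    intro I J
    rw [hf]
    dsimp only
    split
    · exact sq_nonneg _
    · exact le_refl 0
  haveI : IsEmpty (Fin (∅ : Finset (Fin n)).card) := ⟨fun i => absurd i.2 (by simp)⟩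
  have hee : f ∅ ∅ = 1 := by
    rw [hf]
    dsimp only
    rw [dif_pos rfl, Matrix.det_isEmpty, one_pow]
  have h1 : (1 : ℝ) ≤ ∑ J : Finset (Fin n), f ∅ J := by
    rw [← hee]
    exact Finset.single_le_sum (fun J _ => hnonneg ∅ J) (Finset.mem_univ ∅)
  calc (1 : ℝ) ≤ ∑ J : Finset (Fin n), f ∅ J := h1
    _ ≤ ∑ I : Finset (Fin n), ∑ J : Finset (Fin n), f I J :=
      Finset.single_le_sum (f := fun I => ∑ J : Finset (Fin n), f I J)
        (fun I _ => Finset.sum_nonneg fun J _ => hnonneg I J) (Finset.mem_univ ∅)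
end

section
/- For any real number k and any n×m real matrices F and G, det(I_m + k·F^T G) = Σ_P k^{|P|} det(F_P) det(G_P), where the sum is over all square patterns P and |P| denotes the size of the pattern. -/
open Matrix Finset Equiv

private lemma image_univ_orderEmbOfFin {α : Type*} [LinearOrder α] [Fintype α] [DecidableEq α]
    (s : Finset α) {c : ℕ} (h : s.card = c) :
    Finset.univ.image (s.orderEmbOfFin h) = s := by
  ext x
  simp only [Finset.mem_image, Finset.mem_univ, true_and]
  constructor
  · rintro ⟨i, rfl⟩; exact s.orderEmbOfFin_mem h i
  · intro hx
    have : x ∈ Set.range (s.orderEmbOfFin h) := by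
      rw [Finset.range_orderEmbOfFin]; exact hx
    exact this

private lemma prod_eq_prod_orderEmbOfFin {α β : Type*} [LinearOrder α] [Fintype α]
    [DecidableEq α] [CommMonoid β] (s : Finset α) {c : ℕ} (h : s.card = c) (f : α → β) :
    ∏ j ∈ s, f j = ∏ i : Fin c, f (s.orderEmbOfFin h i) := by
  conv_lhs => rw [← image_univ_orderEmbOfFin s h]
  rw [Finset.prod_image (fun a _ b _ hab => (s.orderEmbOfFin h).injective hab)]

private lemma orderEmbOfFin_orderIsoOfFin_symm {α : Type*} [LinearOrder α]
    (s : Finset α) {c : ℕ} (h : s.card = c) (y : {x // x ∈ s}) :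
    s.orderEmbOfFin h ((s.orderIsoOfFin h).symm y) = (y : α) := by
  rw [← Finset.coe_orderIsoOfFin_apply, OrderIso.apply_symm_apply]

private lemma det_one_add_eq_sum_minors {m : ℕ} (M : Matrix (Fin m) (Fin m) ℝ) :
    (1 + M).det = ∑ J : Finset (Fin m),
      (M.submatrix (J.orderEmbOfFin rfl) (J.orderEmbOfFin rfl)).det := by
  rw [Matrix.det_apply']
  have expand : ∀ σ : Equiv.Perm (Fin m),
      (∏ j, (1 + M) (σ j) j) =
      ∑ J : Finset (Fin m), (∏ j ∈ J, M (σ j) j) *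
        (if ∀ j ∈ Finset.univ \ J, σ j = j then 1 else 0) := by
    intro σ
    have h1 : ∀ j, (1 + M) (σ j) j
        = M (σ j) j + (if σ j = j then (1:ℝ) else 0) := by
      intro j
      simp [Matrix.add_apply, Matrix.one_apply, add_comm]
    simp only [h1]
    rw [Finset.prod_add, Finset.powerset_univ]
    refine Finset.sum_congr rfl fun J _ => ?_
    rw [Finset.prod_boole]
    congr 1
    congr 1
  simp only [expand, Finset.mul_sum]
  rw [Finset.sum_comm]
  refine Finset.sum_congr rfl fun J _ => ?_
  have key : ∀ σ : Equiv.Perm (Fin m),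
      ((Equiv.Perm.sign σ : ℤ) : ℝ) * ((∏ j ∈ J, M (σ j) j) *
        (if ∀ j ∈ Finset.univ \ J, σ j = j then 1 else 0))
      = if ∀ j ∈ Finset.univ \ J, σ j = j then
          ((Equiv.Perm.sign σ : ℤ) : ℝ) * ∏ j ∈ J, M (σ j) j else 0 := by
    intro σ
    split <;> simp [mul_comm]
  simp only [key]
  rw [← Finset.sum_filter, Matrix.det_apply']
  refine (Finset.sum_bij
    (i := fun (τ : Equiv.Perm (Fin J.card)) _ =>
      τ.viaFintypeEmbedding (J.orderEmbOfFin rfl).toEmbedding)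
    ?_ ?_ ?_ ?_).symm
  · -- membership
    intro τ _
    simp only [Finset.mem_filter, Finset.mem_univ, true_and, Finset.mem_sdiff]
    intro j hj
    apply Equiv.Perm.viaFintypeEmbedding_apply_notMem_range
    rw [show ((J.orderEmbOfFin rfl).toEmbedding : Fin J.card → Fin m)
        = (J.orderEmbOfFin rfl : Fin J.card → Fin m) from rfl,
      Finset.range_orderEmbOfFin]
    intro hmem
    exact hj hmem
  · -- injectivity
    intro τ₁ _ τ₂ _ hEq
    have hEq' : τ₁.viaFintypeEmbedding (J.orderEmbOfFin rfl).toEmbedding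
        = τ₂.viaFintypeEmbedding (J.orderEmbOfFin rfl).toEmbedding := hEq
    refine Equiv.ext fun i => ?_
    have h1 := Equiv.Perm.viaFintypeEmbedding_apply_image (e := τ₁)
      (f := (J.orderEmbOfFin rfl).toEmbedding) i
    have h2 := Equiv.Perm.viaFintypeEmbedding_apply_image (e := τ₂)
      (f := (J.orderEmbOfFin rfl).toEmbedding) i
    rw [hEq'] at h1
    exact (J.orderEmbOfFin rfl).toEmbedding.injective (h1.symm.trans h2)
  · -- surjectivity
    intro σ hσ
    simp only [Finset.mem_filter, Finset.mem_univ, true_and, Finset.mem_sdiff] at hσ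
    have hfix : ∀ j, j ∉ J → σ j = j := hσ
    have hmaps : ∀ x, x ∈ J → σ x ∈ J := by
      intro x hx
      by_contra hnx
      have h1 : σ (σ x) = σ x := hfix _ hnx
      have := σ.injective h1
      rw [this] at hnx
      exact hnx hx
    have hg : ∀ i : Fin J.card, σ (J.orderEmbOfFin rfl i) ∈ J :=
      fun i => hmaps _ (J.orderEmbOfFin_mem rfl i)
    have hginj : Function.Injective
        (fun i => (J.orderIsoOfFin rfl).symm ⟨σ (J.orderEmbOfFin rfl i), hg i⟩) := by
      intro a b hab
      apply (J.orderEmbOfFin rfl).injective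
      apply σ.injective
      have := congrArg (fun x => ((J.orderIsoOfFin rfl) x : Fin m)) hab
      simpa using this
    refine ⟨Equiv.ofBijective _ (Finite.injective_iff_bijective.mp hginj),
      Finset.mem_univ _, Equiv.ext fun j => ?_⟩
    by_cases hj : j ∈ J
    · have hrange : j ∈ Set.range ((J.orderEmbOfFin rfl).toEmbedding : Fin J.card → Fin m) := by
        rw [show ((J.orderEmbOfFin rfl).toEmbedding : Fin J.card → Fin m)
            = (J.orderEmbOfFin rfl : Fin J.card → Fin m) from rfl,
          Finset.range_orderEmbOfFin]
        exact hj
      obtain ⟨i, rfl⟩ := hrange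
      rw [Equiv.Perm.viaFintypeEmbedding_apply_image]
      show J.orderEmbOfFin rfl ((J.orderIsoOfFin rfl).symm ⟨σ (J.orderEmbOfFin rfl i), hg i⟩)
        = σ ((J.orderEmbOfFin rfl).toEmbedding i)
      rw [orderEmbOfFin_orderIsoOfFin_symm]
      rfl
    · rw [Equiv.Perm.viaFintypeEmbedding_apply_notMem_range, hfix j hj]
      rw [show ((J.orderEmbOfFin rfl).toEmbedding : Fin J.card → Fin m)
          = (J.orderEmbOfFin rfl : Fin J.card → Fin m) from rfl,
        Finset.range_orderEmbOfFin]
      intro hmem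
      exact hj hmem
  · -- values agree
    intro τ _
    rw [Equiv.Perm.viaFintypeEmbedding_sign]
    congr 1
    rw [prod_eq_prod_orderEmbOfFin J rfl]
    refine Finset.prod_congr rfl fun i _ => ?_
    simp only [Matrix.submatrix_apply]
    congr 1
    exact (Equiv.Perm.viaFintypeEmbedding_apply_image (e := τ)
      (f := (J.orderEmbOfFin rfl).toEmbedding) i).symm

private lemma cauchy_binet {n c : ℕ} (A B : Matrix (Fin n) (Fin c) ℝ) :
    (Aᵀ * B).det = ∑ I : Finset (Fin n),
      (if h : I.card = c then
        (A.submatrix (I.orderEmbOfFin h) id).det * (B.submatrix (I.orderEmbOfFin h) id).det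
      else 0) := by
  have step1 : (Aᵀ * B).det = ∑ φ : Fin c → Fin n,
      (A.submatrix φ id).det * ∏ j, B (φ j) j := by
    rw [Matrix.det_apply']
    simp only [Matrix.mul_apply, Matrix.transpose_apply, Finset.prod_univ_sum,
      Finset.mul_sum, Fintype.piFinset_univ]
    rw [Finset.sum_comm]
    refine Finset.sum_congr rfl fun φ _ => ?_
    rw [← Matrix.det_transpose (A.submatrix φ id), Matrix.det_apply', Finset.sum_mul]
    refine Finset.sum_congr rfl fun σ _ => ?_
    rw [Finset.prod_mul_distrib]
    simp only [Matrix.transpose_apply, Matrix.submatrix_apply, id_eq]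
    ring
  rw [step1]
  set f : (Fin c → Fin n) → ℝ := fun φ => (A.submatrix φ id).det * ∏ j, B (φ j) j with hf
  have step2 : ∑ φ : Fin c → Fin n, f φ
      = ∑ φ ∈ Finset.univ.filter (fun φ : Fin c → Fin n => Function.Injective φ), f φ := by
    refine (Finset.sum_subset (Finset.filter_subset _ _) fun φ _ hφ => ?_).symm
    simp only [Finset.mem_filter, Finset.mem_univ, true_and] at hφ
    rw [Function.Injective] at hφ
    push_neg at hφ
    obtain ⟨a, b, hab, hne⟩ := hφ
    have : (A.submatrix φ id).det = 0 := by
      apply Matrix.det_zero_of_row_eq hne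
      ext j
      simp [Matrix.submatrix_apply, hab]
    rw [hf]
    simp [this]
  rw [step2]
  rw [← Finset.sum_fiberwise_of_maps_to
    (g := fun φ : Fin c → Fin n => Finset.univ.image φ)
    (t := (Finset.univ : Finset (Finset (Fin n)))) (fun _ _ => Finset.mem_univ _) f]
  refine Finset.sum_congr rfl fun I _ => ?_
  by_cases h : I.card = c
  · rw [dif_pos h]
    have hbij : ∑ φ ∈ (Finset.univ.filter fun φ : Fin c → Fin n => Function.Injective φ).filter
          (fun φ => Finset.univ.image φ = I), f φ
        = ∑ τ : Equiv.Perm (Fin c), f ((I.orderEmbOfFin h) ∘ τ) := by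
      refine (Finset.sum_bij
        (i := fun (τ : Equiv.Perm (Fin c)) _ => (I.orderEmbOfFin h) ∘ τ) ?_ ?_ ?_ ?_).symm
      · intro τ _
        simp only [Finset.mem_filter, Finset.mem_univ, true_and]
        constructor
        · exact (I.orderEmbOfFin h).injective.comp τ.injective
        · ext x
          simp only [Finset.mem_image, Finset.mem_univ, true_and]
          constructor
          · rintro ⟨i, rfl⟩; exact I.orderEmbOfFin_mem h (τ i)
          · intro hx
            have hx' : x ∈ Set.range (I.orderEmbOfFin h) := by
              rw [Finset.range_orderEmbOfFin]; exact hx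
            obtain ⟨i, rfl⟩ := hx'
            exact ⟨τ.symm i, by simp⟩
      · intro τ₁ _ τ₂ _ hEq
        have hEq' : ⇑(I.orderEmbOfFin h) ∘ ⇑τ₁ = ⇑(I.orderEmbOfFin h) ∘ ⇑τ₂ := hEq
        exact Equiv.ext fun i => (I.orderEmbOfFin h).injective (congrFun hEq' i)
      · intro φ hφ
        simp only [Finset.mem_filter, Finset.mem_univ, true_and] at hφ
        obtain ⟨hinj, himg⟩ := hφ
        have hmem : ∀ i, φ i ∈ I := by
          intro i
          rw [← himg]
          exact Finset.mem_image_of_mem φ (Finset.mem_univ i)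
        have hginj : Function.Injective
            (fun i => (I.orderIsoOfFin h).symm ⟨φ i, hmem i⟩) := by
          intro a b hab
          apply hinj
          have := congrArg (fun x => ((I.orderIsoOfFin h) x : Fin n)) hab
          simpa using this
        refine ⟨Equiv.ofBijective _ (Finite.injective_iff_bijective.mp hginj),
          Finset.mem_univ _, ?_⟩
        funext i
        show I.orderEmbOfFin h ((I.orderIsoOfFin h).symm ⟨φ i, hmem i⟩) = φ i
        rw [orderEmbOfFin_orderIsoOfFin_symm]
      · intro τ _
        rfl
    rw [hbij]
    have hval : ∀ τ : Equiv.Perm (Fin c),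
        f ((I.orderEmbOfFin h) ∘ τ)
        = (A.submatrix (I.orderEmbOfFin h) id).det *
          (((Equiv.Perm.sign τ : ℤ) : ℝ) * ∏ j, (B.submatrix (I.orderEmbOfFin h) id) (τ j) j) := by
      intro τ
      show (A.submatrix (⇑(I.orderEmbOfFin h) ∘ ⇑τ) id).det *
          ∏ j, B ((⇑(I.orderEmbOfFin h) ∘ ⇑τ) j) j = _
      have hA : (A.submatrix (⇑(I.orderEmbOfFin h) ∘ ⇑τ) id)
          = (A.submatrix (I.orderEmbOfFin h) id).submatrix τ id := rfl
      rw [hA, Matrix.det_permute]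
      simp only [Matrix.submatrix_apply, id_eq, Function.comp_apply]
      ring
    simp only [hval]
    rw [← Finset.mul_sum, ← Matrix.det_apply']
  · rw [dif_neg h]
    refine Finset.sum_eq_zero fun φ hφ => ?_
    simp only [Finset.mem_filter, Finset.mem_univ, true_and] at hφ
    obtain ⟨hinj, himg⟩ := hφ
    exfalso
    apply h
    rw [← himg, Finset.card_image_of_injective _ hinj, Finset.card_univ, Fintype.card_fin]

theorem det_one_add_smul_transpose_mul {n m : ℕ} (k : ℝ) (F G : Matrix (Fin n) (Fin m) ℝ) :
    (1 + k • (Fᵀ * G)).det =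
      ∑ I : Finset (Fin n), ∑ J : Finset (Fin m),
        (if h : I.card = J.card then
          k ^ I.card *
          ((F.submatrix (I.orderEmbOfFin h) (J.orderEmbOfFin rfl)).det *
           (G.submatrix (I.orderEmbOfFin h) (J.orderEmbOfFin rfl)).det)
        else 0) := by
  rw [det_one_add_eq_sum_minors, Finset.sum_comm]
  refine Finset.sum_congr rfl fun J _ => ?_
  have h1 : (k • (Fᵀ * G)).submatrix (J.orderEmbOfFin rfl) (J.orderEmbOfFin rfl)
      = k • ((F.submatrix id (J.orderEmbOfFin rfl))ᵀ * (G.submatrix id (J.orderEmbOfFin rfl))) := by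
    ext a b
    simp [Matrix.mul_apply, Matrix.submatrix_apply, Matrix.smul_apply, Matrix.transpose_apply]
  rw [h1, Matrix.det_smul, cauchy_binet, Finset.mul_sum]
  refine Finset.sum_congr rfl fun I _ => ?_
  by_cases h : I.card = J.card
  · rw [dif_pos h, dif_pos h]
    rw [Matrix.submatrix_submatrix, Matrix.submatrix_submatrix]
    simp only [Function.comp_id, Function.id_comp, Fintype.card_fin]
    rw [h]
  · rw [dif_neg h, dif_neg h, mul_zero]
end
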